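/- Suppose c_a·‖g(u) − g(v)‖ ≤ ‖u − v‖ ≤ c_b·‖g(u) − g(v)‖ for all u, v ∈ E, and suppose Σ_{t=1}^T ‖g(s_t) − g(s_d)‖ ≤ c_2·T^p. If c_a·Δ ≥ 2·c_2·c_b·T^{p−1}, where Δ = ‖g(s_d) − g(s_o)‖, then (1/T)·Σ_{t=1}^T ‖s_t − s_o‖ ≥ (c_a·Δ + c_2·c_b·T^{p−1})/4. -/
import Mathlib


open Real

theorem stmt11 {E F : Type*} [NormedAddCommGroup E] [NormedSpace ℝ E]
    [NormedAddCommGroup F] [NormedSpace ℝ F]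
    (g : E → F) (ca cb c2 p : ℝ) (hca : 0 < ca) (hcb : 0 < cb) (hc2 : 0 < c2)
    (hp0 : 0 < p) (hp1 : p < 1)
    (T : ℕ) (hT : 0 < T) (s : Fin T → E) (so sd : E)
    (hlow : ∀ u v : E, ca * ‖g u - g v‖ ≤ ‖u - v‖)
    (hupp : ∀ u v : E, ‖u - v‖ ≤ cb * ‖g u - g v‖)
    (hreg : ∑ t, ‖g (s t) - g sd‖ ≤ c2 * (T : ℝ) ^ p)
    (hbig : ca * ‖g sd - g so‖ ≥ 2 * c2 * cb * (T : ℝ) ^ (p - 1)) :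
    (1 / (T : ℝ)) * ∑ t, ‖s t - so‖ ≥
      (ca * ‖g sd - g so‖ + c2 * cb * (T : ℝ) ^ (p - 1)) / 4 := by
  have hT0 : (0:ℝ) < (T:ℝ) := by exact_mod_cast hT
  set Δ := ‖g sd - g so‖ with hΔ
  set X := (T:ℝ) ^ (p - 1) with hXdef
  have hX : 0 < X := Real.rpow_pos_of_pos hT0 _
  have hXT : X * (T:ℝ) = (T:ℝ) ^ p := by
    rw [hXdef, ← Real.rpow_add_one hT0.ne']
    norm_num
  have hΔpos : 0 < Δ := by
    have : 0 < 2 * c2 * cb * X := by positivity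
    nlinarith
  have hcab : ca ≤ cb := by
    have h1 := hlow sd so
    have h2 := hupp sd so
    nlinarith
  have key : ∀ t, ca * Δ - ca * ‖g (s t) - g sd‖ ≤ ‖s t - so‖ := by
    intro t
    have h1 := hlow (s t) so
    have htri : Δ ≤ ‖g sd - g (s t)‖ + ‖g (s t) - g so‖ :=
      norm_sub_le_norm_sub_add_norm_sub _ _ _
    rw [norm_sub_rev (g sd)] at htri
    nlinarith
  have hsum : (T:ℝ) * (ca * Δ) - ca * ∑ t, ‖g (s t) - g sd‖ ≤ ∑ t, ‖s t - so‖ := by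
    have := Finset.sum_le_sum (fun t (_ : t ∈ Finset.univ) => key t)
    simpa [Finset.sum_sub_distrib, Finset.mul_sum, mul_comm] using this
  have hS : ca * ∑ t, ‖g (s t) - g sd‖ ≤ ca * (c2 * ((T:ℝ) ^ p)) :=
    mul_le_mul_of_nonneg_left hreg hca.le
  have hmain : (T:ℝ) * (ca * Δ) - ca * (c2 * (X * (T:ℝ))) ≤ ∑ t, ‖s t - so‖ := by
    rw [hXT]; linarith
  have h2 : (ca * Δ + c2 * cb * X) / 4 ≤
      (1 / (T:ℝ)) * ((T:ℝ) * (ca * Δ) - ca * (c2 * (X * (T:ℝ)))) := by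
    rw [one_div, inv_mul_eq_div, le_div_iff₀ hT0]
    have hh : ca * (c2 * X) ≤ cb * (c2 * X) :=
      mul_le_mul_of_nonneg_right hcab (by positivity)
    have hsc : (ca * Δ + c2 * cb * X) / 4 ≤ ca * Δ - ca * (c2 * X) := by
      nlinarith [mul_pos hc2 hX]
    nlinarith [mul_le_mul_of_nonneg_right hsc hT0.le]
  have h3 : (1 / (T:ℝ)) * ((T:ℝ) * (ca * Δ) - ca * (c2 * (X * (T:ℝ)))) ≤
      (1 / (T:ℝ)) * ∑ t, ‖s t - so‖ :=
    mul_le_mul_of_nonneg_left hmain (by positivity)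
  linarith
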